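/- If there exists a 𝔠-Lusin set and 𝔬 = 𝔠, then GES fails: there exist a sequence ⟨f_n⟩ of functions [0,1] → ℝ converging pointwise to 0 and an η > 0 such that every subset A ⊆ [0,1] on which ⟨f_n⟩ converges uniformly has Lebesgue outer measure μ*(A) ≤ 1 − η. -/

import Mathlib

open MeasureTheory Filter Set

/-- `𝔬`: the least cardinality of a subset of `[0,1]` of full Lebesgue outer measure. -/
noncomputable def oNum : Cardinal :=
  sInf {c | ∃ Y : Set ℝ, Y ⊆ Set.Icc 0 1 ∧ volume Y = 1 ∧ Cardinal.mk Y = c}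

/-- A `κ`-Lusin set: a subset of `ℝ` of cardinality `κ` all of whose meager subsets have
cardinality less than `κ`. -/
def IsLusinSet (κ : Cardinal) (L : Set ℝ) : Prop :=
  Cardinal.mk L = κ ∧ ∀ M ⊆ L, IsMeagre M → Cardinal.mk M < κ

namespace Stmt14Aux

def qSet (k : ℕ) : Set ℝ := Set.range (fun j : ℤ => (j : ℝ) / (k + 1))

lemma qSet_nonempty (k : ℕ) : (qSet k).Nonempty := ⟨(0:ℤ)/(k+1), ⟨0, rfl⟩⟩

lemma isClosed_qSet (k : ℕ) : IsClosed (qSet k) := by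
  have hpos : (0:ℝ) < 1 / (k + 1) := by positivity
  refine (Metric.isClosedEmbedding_of_pairwise_le_dist hpos ?_).isClosed_range
  intro i j hij
  have h1 : (1:ℝ) ≤ |(i:ℝ) - j| := by
    rw [← Int.cast_sub, ← Int.cast_abs]
    exact_mod_cast Int.one_le_abs (sub_ne_zero.mpr hij)
  have hk : (0:ℝ) < (k:ℝ) + 1 := by positivity
  rw [Real.dist_eq, div_sub_div_same, abs_div, abs_of_pos hk]
  gcongr

noncomputable def hFun (y : ℝ) (k : ℕ) : ℕ := ⌈(Metric.infDist y (qSet k))⁻¹⌉₊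

open scoped Classical in
noncomputable def mIdx (G : ℕ → ℕ) (n : ℕ) : ℕ :=
  if H : ∃ k, n < G k then Nat.find H else n

open scoped Classical in
lemma mIdx_def (G : ℕ → ℕ) (n : ℕ) :
    mIdx G n = if H : ∃ k, n < G k then Nat.find H else n := rfl

lemma mIdx_tendsto (G : ℕ → ℕ) : Tendsto (mIdx G) atTop atTop := by
  refine tendsto_atTop_atTop.mpr fun K => ⟨max K ((Finset.range K).sup G + 1), fun n hn => ?_⟩
  have hK : K ≤ n := le_trans (le_max_left _ _) hn
  have hs : (Finset.range K).sup G + 1 ≤ n := le_trans (le_max_right _ _) hn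
  rw [mIdx_def]
  split_ifs with H
  · by_contra hlt
    push_neg at hlt
    have h1 := Nat.find_spec H
    have h2 : G (Nat.find H) ≤ (Finset.range K).sup G :=
      Finset.le_sup (Finset.mem_range.mpr hlt)
    omega
  · exact hK

lemma tendsto_inv_mIdx (G : ℕ → ℕ) :
    Tendsto (fun n => 1 / ((mIdx G n : ℝ) + 1)) atTop (nhds 0) :=
  tendsto_one_div_add_atTop_nhds_zero_nat.comp (mIdx_tendsto G)

lemma isMeagre_of_closed_int {S : Set ℝ} (hc : IsClosed S) (hi : interior S = ∅) :
    IsMeagre S := by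
  rw [isMeagre_iff_countable_union_isNowhereDense]
  exact ⟨{S}, by simpa [IsNowhereDense, hc.closure_eq] using hi, countable_singleton _,
    by simp⟩

lemma isMeagre_of_countable {S : Set ℝ} (hS : S.Countable) : IsMeagre S := by
  rw [isMeagre_iff_countable_union_isNowhereDense]
  refine ⟨(fun x => ({x} : Set ℝ)) '' S, ?_, hS.image _, fun x hx => ?_⟩
  · rintro t ⟨x, -, rfl⟩
    rw [IsNowhereDense, closure_singleton, interior_singleton]
  · exact ⟨{x}, ⟨x, hx, rfl⟩, rfl⟩

lemma key (φ : Set.Icc (0:ℝ) 1 → ℝ) (A : Set ℝ) (hA : A ⊆ Set.Icc 0 1)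
    (hU : TendstoUniformlyOn
      (fun n x => if hx : x ∈ Set.Icc (0:ℝ) 1 then
        1 / ((mIdx (hFun (φ ⟨x, hx⟩)) n : ℝ) + 1) else 0)
      0 atTop A) :
    ∃ M : Set ℝ, IsMeagre M ∧ ∀ x (hx : x ∈ A), φ ⟨x, hA hx⟩ ∈ M := by
  rw [Metric.tendstoUniformlyOn_iff] at hU
  have hB : ∀ K : ℕ, ∃ n : ℕ, 1 ≤ n ∧ ∀ x (hx : x ∈ A), hFun (φ ⟨x, hA hx⟩) K ≤ n := by
    intro K
    have hε : (0:ℝ) < 1 / ((K:ℝ) + 2) := by positivity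
    obtain ⟨n, hn1, hn2⟩ := ((hU _ hε).and (eventually_ge_atTop 1)).exists
    refine ⟨n, hn2, fun x hx => ?_⟩
    have hxI := hA hx
    have hd := hn1 x hx
    set G := hFun (φ ⟨x, hxI⟩) with hG
    have hv : (0:ℝ) ≤ 1 / ((mIdx G n : ℝ) + 1) := by positivity
    rw [Pi.zero_apply, dif_pos hxI, Real.dist_eq, zero_sub, abs_neg, abs_of_nonneg hv] at hd
    have hm : K + 1 < mIdx G n := by
      have h1 : (K:ℝ) + 2 < (mIdx G n : ℝ) + 1 := by
        have := lt_of_one_div_lt_one_div (by positivity : (0:ℝ) < (mIdx G n : ℝ) + 1) hd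
        linarith
      have h2 : K + 2 < mIdx G n + 1 := by exact_mod_cast h1
      omega
    rw [mIdx_def] at hm
    split_ifs at hm with H
    · have := Nat.find_min H (show K < Nat.find H by omega)
      omega
    · push_neg at H
      exact le_trans (H K) (le_refl n)
  choose B hB1 hB2 using hB
  set S : Set ℝ := {y : ℝ | ∀ K : ℕ, 1 / (B K : ℝ) ≤ Metric.infDist y (qSet K)} with hSdef
  set R : Set ℝ := ⋃ K, qSet K with hRdef
  have hSc : IsClosed S := by
    have : S = ⋂ K : ℕ, (fun y => Metric.infDist y (qSet K)) ⁻¹' Ici (1 / (B K : ℝ)) := by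
      ext y; simp [hSdef, mem_iInter]
    rw [this]
    exact isClosed_iInter fun K => IsClosed.preimage (Metric.continuous_infDist_pt _) isClosed_Ici
  have hSi : interior S = ∅ := by
    rw [eq_empty_iff_forall_notMem]
    intro y hy
    obtain ⟨ε, hε, hball⟩ := Metric.mem_nhds_iff.mp (mem_interior_iff_mem_nhds.mp hy)
    obtain ⟨K, hK⟩ := exists_nat_gt (1/ε)
    have hc : (0:ℝ) < (K:ℝ) + 1 := by positivity
    have hKε : 1/((K:ℝ)+1) < ε := by
      rw [div_lt_iff₀ hc]
      have hKK : (1:ℝ)/ε < (K:ℝ) + 1 := by linarith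
      calc (1:ℝ) = ε * (1/ε) := by field_simp
        _ < ε * ((K:ℝ)+1) := mul_lt_mul_of_pos_left hKK hε
    set z : ℝ := (⌊y * ((K:ℝ)+1)⌋ : ℝ) / ((K:ℝ)+1) with hzdef
    have hz1 : z ∈ qSet K := ⟨⌊y * ((K:ℝ)+1)⌋, rfl⟩
    have h1 : y * ((K:ℝ)+1) - 1 < (⌊y * ((K:ℝ)+1)⌋ : ℝ) := Int.sub_one_lt_floor _
    have h2 : (⌊y * ((K:ℝ)+1)⌋ : ℝ) ≤ y * ((K:ℝ)+1) := Int.floor_le _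
    have hzc : z * ((K:ℝ)+1) = (⌊y * ((K:ℝ)+1)⌋ : ℝ) := div_mul_cancel₀ _ (ne_of_gt hc)
    have h3 : y - z < 1/((K:ℝ)+1) := by
      rw [lt_div_iff₀ hc]; nlinarith
    have h4 : z ≤ y := by
      rw [hzdef, div_le_iff₀ hc]; exact h2
    have hzb : z ∈ Metric.ball y ε := by
      rw [Metric.mem_ball, Real.dist_eq, abs_lt]
      constructor <;> linarith
    have hzS := hball hzb K
    have h0 : Metric.infDist z (qSet K) = 0 := Metric.infDist_zero_of_mem hz1
    have hpos : (0:ℝ) < 1/(B K : ℝ) := by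
      have h5 : (1:ℝ) ≤ (B K : ℝ) := by exact_mod_cast hB1 K
      positivity
    rw [h0] at hzS; linarith
  have hmS : IsMeagre S := isMeagre_of_closed_int hSc hSi
  have hmR : IsMeagre R := isMeagre_of_countable (countable_iUnion fun K => countable_range _)
  refine ⟨S ∪ R, by rw [IsMeagre, Set.compl_union]; exact Filter.inter_mem hmS hmR,
    fun x hx => ?_⟩
  by_cases hy : ∃ K, φ ⟨x, hA hx⟩ ∈ qSet K
  · exact Or.inr (mem_iUnion.mpr hy)
  · push_neg at hy
    refine Or.inl fun K => ?_
    have hdpos : 0 < Metric.infDist (φ ⟨x, hA hx⟩) (qSet K) :=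
      ((isClosed_qSet K).notMem_iff_infDist_pos (qSet_nonempty K)).mp (hy K)
    have hle := hB2 K x hx
    have h2 : (Metric.infDist (φ ⟨x, hA hx⟩) (qSet K))⁻¹ ≤ (B K : ℝ) :=
      le_trans (Nat.le_ceil _) (by exact_mod_cast hle)
    rw [one_div]
    calc (B K : ℝ)⁻¹ ≤ ((Metric.infDist (φ ⟨x, hA hx⟩) (qSet K))⁻¹)⁻¹ := by
          apply inv_anti₀ (by positivity) h2
      _ = Metric.infDist (φ ⟨x, hA hx⟩) (qSet K) := inv_inv _

end Stmt14Aux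

open Stmt14Aux in
/-- If there exists a `𝔠`-Lusin set and `𝔬 = 𝔠`, then `GES` fails. -/
theorem stmt14 (hL : ∃ L : Set ℝ, IsLusinSet Cardinal.continuum L)
    (ho : oNum = Cardinal.continuum) :
    ∃ f : ℕ → ℝ → ℝ,
      (∀ x ∈ Set.Icc (0:ℝ) 1, Tendsto (fun n => f n x) atTop (nhds 0)) ∧
      ∃ η : ℝ, 0 < η ∧
        ∀ A ⊆ Set.Icc (0:ℝ) 1, TendstoUniformlyOn f 0 atTop A →
          volume A ≤ ENNReal.ofReal (1 - η) := by
  obtain ⟨L, hmkL, hmeagL⟩ := hL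
  have hIcc : Cardinal.mk (Set.Icc (0:ℝ) 1) = Cardinal.continuum :=
    Cardinal.mk_Icc_real (by norm_num)
  obtain ⟨e⟩ := Cardinal.eq.mp (hIcc.trans hmkL.symm)
  refine ⟨fun n x => if hx : x ∈ Set.Icc (0:ℝ) 1 then
      1 / ((mIdx (hFun ((e ⟨x, hx⟩ : L) : ℝ)) n : ℝ) + 1) else 0, ?_, ?_⟩
  · intro x hx
    have : (fun n => (fun n x => if hx : x ∈ Set.Icc (0:ℝ) 1 then
        1 / ((mIdx (hFun ((e ⟨x, hx⟩ : L) : ℝ)) n : ℝ) + 1) else 0) n x)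
        = fun n => 1 / ((mIdx (hFun ((e ⟨x, hx⟩ : L) : ℝ)) n : ℝ) + 1) := by
      funext n; simp only [dif_pos hx]
    rw [this]
    exact tendsto_inv_mIdx _
  · by_contra hcon
    push_neg at hcon
    have hcon' : ∀ m : ℕ, ∃ A, A ⊆ Set.Icc (0:ℝ) 1 ∧
        TendstoUniformlyOn (fun n x => if hx : x ∈ Set.Icc (0:ℝ) 1 then
          1 / ((mIdx (hFun ((e ⟨x, hx⟩ : L) : ℝ)) n : ℝ) + 1) else 0) 0 atTop A ∧
        ENNReal.ofReal (1 - 1/((m:ℝ)+1)) < volume A := by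
      intro m
      obtain ⟨A, h1, h2, h3⟩ := hcon (1/((m:ℝ)+1)) (by positivity)
      exact ⟨A, h1, h2, h3⟩
    choose A hA1 hA2 hA3 using hcon'
    have hkey := fun m => key (fun a => ((e a : L) : ℝ)) (A m) (hA1 m) (hA2 m)
    choose M hM1 hM2 using hkey
    set AA := ⋃ m, A m with hAAdef
    have hAA : AA ⊆ Set.Icc (0:ℝ) 1 := iUnion_subset hA1
    have hvol : volume AA = 1 := by
      refine le_antisymm ?_ ?_
      · calc volume AA ≤ volume (Set.Icc (0:ℝ) 1) := measure_mono hAA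
          _ = 1 := by rw [Real.volume_Icc]; norm_num
      · refine le_of_tendsto' (x := atTop) (f := fun m : ℕ => ENNReal.ofReal (1 - 1/((m:ℝ)+1))) ?_ ?_
        · have h1 : Tendsto (fun m : ℕ => 1 - 1/((m:ℝ)+1)) atTop (nhds 1) := by
            have h := (tendsto_const_nhds (x := (1:ℝ)) (f := atTop (α := ℕ))).sub
              tendsto_one_div_add_atTop_nhds_zero_nat
            simpa using h
          have h2 := (ENNReal.continuous_ofReal.tendsto 1).comp h1
          simpa [ENNReal.ofReal_one, Function.comp_def] using h2
        · exact fun m => le_of_lt (lt_of_lt_of_le (hA3 m) (measure_mono (subset_iUnion A m)))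
    have hcard : Cardinal.mk AA < Cardinal.continuum := by
      have hMM : IsMeagre (⋃ m, M m) := isMeagre_iUnion hM1
      have hlt := hmeagL ((⋃ m, M m) ∩ L) inter_subset_right hMM.inter
      refine lt_of_le_of_lt ?_ hlt
      have hinj : Function.Injective (fun a : AA =>
          (⟨((e ⟨a.1, hAA a.2⟩ : L) : ℝ), by
            obtain ⟨m, hm⟩ := mem_iUnion.mp a.2
            exact ⟨mem_iUnion.mpr ⟨m, hM2 m a.1 hm⟩, (e ⟨a.1, hAA a.2⟩).2⟩⟩ :
            ((⋃ m, M m) ∩ L : Set ℝ))) := by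
        intro a b hab
        simp only [Subtype.mk.injEq] at hab
        have h2 : (e ⟨a.1, hAA a.2⟩) = (e ⟨b.1, hAA b.2⟩) := Subtype.ext hab
        have h3 := e.injective h2
        have h4 : a.1 = b.1 := by simpa using h3
        exact Subtype.ext h4
      exact Cardinal.mk_le_of_injective hinj
    have h1 : Cardinal.continuum ≤ Cardinal.mk AA := by
      rw [← ho]
      exact csInf_le' ⟨AA, hAA, hvol, rfl⟩
    exact absurd hcard (not_lt.mpr h1)
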